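/- For all integers χ ≥ 0 and n ≥ 0, and rational a: evaluating f_{y,a} = g_{1,a}^y·f_{0,a} at a = r²-1 and comparing coefficients, one has the identity of generating functions ∑_{n≥0} C(χ - (r²-1)(n-1), n) z^n = g_{1,r²-1}(z)^χ · f_{0,r²-1}(z), where C is the generalized binomial coefficient and g_{1,a}, f_{0,a} are as defined above. -/

import Mathlib

open PowerSeries Finset

/-- Generalized binomial coefficient `C(x,n) = x(x-1)⋯(x-n+1)/n!`. -/
noncomputable def gchoose (x : ℚ) (n : ℕ) : ℚ :=
  (∏ i ∈ Finset.range n, (x - i)) / n.factorial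

/-- `g_{1,a}(z) = ∑_{n≥0} (1/(1-an)) C(1-an,n) z^n`, with the `n`-th coefficient
interpreted as `C(-an,n-1)/n` for `n ≥ 1` and constant term `1`. -/
noncomputable def gOne (a : ℚ) : PowerSeries ℚ :=
  PowerSeries.mk fun n =>
    if n = 0 then 1 else gchoose (-a * (n : ℚ)) (n - 1) / (n : ℚ)

/-- `f_{0,a}(z) = ∑_{n≥0} C(-a(n-1),n) z^n`. -/
noncomputable def fZero (a : ℚ) : PowerSeries ℚ :=
  PowerSeries.mk fun n => gchoose (-a * ((n : ℚ) - 1)) n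

lemma gchoose_congr {x y : ℚ} (n : ℕ) (h : x = y) : gchoose x n = gchoose y n := by rw [h]

lemma gchoose_zero (x : ℚ) : gchoose x 0 = 1 := by simp [gchoose]

lemma gchoose_succ (c : ℚ) (n : ℕ) :
    gchoose c (n + 1) = gchoose c n * (c - n) / (n + 1) := by
  unfold gchoose
  rw [Finset.prod_range_succ, Nat.factorial_succ]
  have h1 : ((n.factorial : ℚ)) ≠ 0 := Nat.cast_ne_zero.mpr (Nat.factorial_ne_zero n)
  have h2 : ((n : ℚ) + 1) ≠ 0 := by positivity
  push_cast
  field_simp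
  all_goals tauto

lemma gchoose_succ' (c : ℚ) (n : ℕ) :
    gchoose c (n + 1) = gchoose (c - 1) n * c / (n + 1) := by
  unfold gchoose
  rw [Finset.prod_range_succ']
  have h1 : ((n.factorial : ℚ)) ≠ 0 := Nat.cast_ne_zero.mpr (Nat.factorial_ne_zero n)
  have h2 : ((n : ℚ) + 1) ≠ 0 := by positivity
  rw [Nat.factorial_succ]
  push_cast
  rw [Finset.prod_congr rfl (fun i (_ : i ∈ Finset.range n) =>
    show c - ((i : ℚ) + 1) = c - 1 - (i : ℚ) by ring)]
  field_simp
  ring_nf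
  all_goals tauto

lemma gchoose_pascal (c : ℚ) (n : ℕ) :
    gchoose c (n + 1) = gchoose (c - 1) (n + 1) + gchoose (c - 1) n := by
  rw [gchoose_succ' c n, gchoose_succ (c - 1) n]
  have h2 : ((n : ℚ) + 1) ≠ 0 := by positivity
  field_simp
  ring_nf
  all_goals tauto

/-- Abel–Rothe coefficient `A_k(x;z) = (x/(x+kz)) C(x+kz, k)`. -/
noncomputable def Aab (z x : ℚ) (k : ℕ) : ℚ :=
  if k = 0 then 1 else x * gchoose (x + k * z - 1) (k - 1) / k

noncomputable def Bab (z y : ℚ) (m : ℕ) : ℚ := gchoose (y + m * z) m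

lemma Aab_zero (z x : ℚ) : Aab z x 0 = 1 := by simp [Aab]

lemma Aab_x_zero (z : ℚ) (k : ℕ) (hk : k ≠ 0) : Aab z 0 k = 0 := by
  simp [Aab, hk]

lemma Aab_pascal (z x : ℚ) (k : ℕ) :
    Aab z x (k + 1) = Aab z (x - 1) (k + 1) + Aab z (x + z - 1) k := by
  rcases k with _ | m
  · simp [Aab, gchoose_zero]
  · -- k + 1 = m + 2
    have hm1 : ((m : ℚ) + 1) ≠ 0 := by positivity
    have hm2 : ((m : ℚ) + 2) ≠ 0 := by positivity
    simp only [Aab, Nat.succ_ne_zero, if_false, Nat.add_sub_cancel]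
    push_cast
    rw [show (m + 1 : ℕ) = m + 1 from rfl]
    rw [gchoose_succ' (x + ((m : ℚ) + 1 + 1) * z - 1) m,
        gchoose_succ (x - 1 + ((m : ℚ) + 1 + 1) * z - 1) m]
    rw [gchoose_congr (n := m)
      (show x + ((m : ℚ) + 1 + 1) * z - 1 - 1 = x - 1 + ((m : ℚ) + 1 + 1) * z - 1 by ring)]
    rw [gchoose_congr (n := m)
      (show x + z - 1 + ((m : ℚ) + 1) * z - 1 = x - 1 + ((m : ℚ) + 1 + 1) * z - 1 by ring)]
    set G := gchoose (x - 1 + ((m : ℚ) + 1 + 1) * z - 1) m with hG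
    field_simp
    ring_nf
    all_goals tauto

lemma Bab_pascal (z y : ℚ) (m : ℕ) :
    Bab z y (m + 1) = Bab z (y - 1) (m + 1) + Bab z (y + z - 1) m := by
  unfold Bab
  push_cast
  rw [gchoose_pascal (y + ((m : ℚ) + 1) * z) m]
  congr 1
  · exact gchoose_congr _ (by ring)
  · exact gchoose_congr _ (by ring)

/-- Rothe convolution sum. -/
noncomputable def Sab (z x y : ℚ) (n : ℕ) : ℚ :=
  ∑ k ∈ Finset.range (n + 1), Aab z x k * Bab z y (n - k)

lemma Sab_step (z x y : ℚ) (n : ℕ) :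
    Sab z x y (n + 1) - Sab z (x - 1) y (n + 1) = Sab z (x + z - 1) y n := by
  unfold Sab
  rw [← Finset.sum_sub_distrib]
  have : ∀ k, Aab z x k * Bab z y (n + 1 - k) - Aab z (x - 1) k * Bab z y (n + 1 - k)
      = (Aab z x k - Aab z (x - 1) k) * Bab z y (n + 1 - k) := fun k => by ring
  simp only [this]
  rw [Finset.sum_range_succ']
  simp only [Aab_zero, sub_self, zero_mul, add_zero]
  refine Finset.sum_congr rfl fun k _ => ?_
  rw [Aab_pascal]
  have : n + 1 - (k + 1) = n - k := by omega
  rw [this]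
  ring

lemma Sab_at_zero (z y : ℚ) (n : ℕ) : Sab z 0 y n = Bab z y n := by
  unfold Sab
  rw [Finset.sum_eq_single 0]
  · simp [Aab_zero]
  · intro k _ hk
    rw [Aab_x_zero z k hk, zero_mul]
  · intro h
    exact absurd (Finset.mem_range.mpr (Nat.succ_pos n)) h

/-- The polynomial in `x` whose evaluation is `Aab z x k`. -/
noncomputable def Apoly (z : ℚ) (k : ℕ) : Polynomial ℚ :=
  if k = 0 then 1 else
    Polynomial.C ((k.factorial : ℚ)⁻¹) * (Polynomial.X *
      ∏ j ∈ Finset.range (k - 1), (Polynomial.X + Polynomial.C (k * z - 1 - j)))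

lemma Apoly_eval (z x : ℚ) (k : ℕ) : (Apoly z k).eval x = Aab z x k := by
  rcases k with _ | m
  · simp [Apoly, Aab]
  · simp only [Apoly, Aab, Nat.succ_ne_zero, if_false, Nat.add_sub_cancel]
    simp only [Polynomial.eval_mul, Polynomial.eval_C, Polynomial.eval_X,
      Polynomial.eval_prod, Polynomial.eval_add]
    unfold gchoose
    have hfne : ((m.factorial : ℚ)) ≠ 0 := Nat.cast_ne_zero.mpr (Nat.factorial_ne_zero m)
    have hm1 : ((m : ℚ) + 1) ≠ 0 := by positivity
    rw [Nat.factorial_succ]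
    push_cast
    rw [Finset.prod_congr rfl (fun j (_ : j ∈ Finset.range m) =>
      show x + (((m : ℚ) + 1) * z - 1 - (j : ℚ)) = x + ((m : ℚ) + 1) * z - 1 - (j : ℚ) by ring)]
    field_simp
    all_goals tauto

/-- The polynomial in `x` whose evaluation is `Bab z (x+y) n`. -/
noncomputable def Bpoly (z y : ℚ) (n : ℕ) : Polynomial ℚ :=
  Polynomial.C ((n.factorial : ℚ)⁻¹) *
    ∏ i ∈ Finset.range n, (Polynomial.X + Polynomial.C (y + n * z - i))

lemma Bpoly_eval (z y x : ℚ) (n : ℕ) : (Bpoly z y n).eval x = Bab z (x + y) n := by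
  simp only [Bpoly, Polynomial.eval_mul, Polynomial.eval_C, Polynomial.eval_prod,
    Polynomial.eval_add, Polynomial.eval_X]
  unfold Bab gchoose
  have : ∏ i ∈ Finset.range n, (x + (y + (n : ℚ) * z - (i : ℚ)))
      = ∏ i ∈ Finset.range n, ((x + y + (n : ℚ) * z) - (i : ℚ)) := by
    refine Finset.prod_congr rfl fun i _ => by ring
  rw [this, div_eq_mul_inv, mul_comm]

/-- Rothe's identity. -/
lemma rothe : ∀ (n : ℕ) (z x y : ℚ), Sab z x y n = Bab z (x + y) n := by
  intro n
  induction n with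
  | zero =>
    intro z x y
    simp [Sab, Aab_zero, Bab, gchoose_zero]
  | succ n ih =>
    intro z x y
    -- F x := Sab z x y (n+1) - Bab z (x+y) (n+1) satisfies F x = F (x-1)
    have hper : ∀ x : ℚ, Sab z x y (n + 1) - Bab z (x + y) (n + 1)
        = Sab z (x - 1) y (n + 1) - Bab z (x - 1 + y) (n + 1) := by
      intro x
      have h1 := Sab_step z x y n
      have h2 := Bab_pascal z (x + y) n
      have h3 := ih z (x + z - 1) y
      have harg : Bab z (x + y + z - 1) n = Bab z (x + z - 1 + y) n := by
        unfold Bab; exact gchoose_congr _ (by ring)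
      have harg2 : Bab z (x + y - 1) (n + 1) = Bab z (x - 1 + y) (n + 1) := by
        unfold Bab; exact gchoose_congr _ (by ring)
      rw [h2, harg2] at *
      linarith [h1, h3, harg ▸ h3]
    -- the polynomial realizing F
    set P : Polynomial ℚ :=
      (∑ k ∈ Finset.range (n + 2), Apoly z k * Polynomial.C (Bab z y (n + 1 - k)))
        - Bpoly z y (n + 1) with hP
    have hPeval : ∀ x : ℚ, P.eval x = Sab z x y (n + 1) - Bab z (x + y) (n + 1) := by
      intro x
      simp only [hP, Polynomial.eval_sub, Polynomial.eval_finset_sum, Polynomial.eval_mul,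
        Polynomial.eval_C, Apoly_eval, Bpoly_eval]
      rfl
    have hroot : ∀ m : ℕ, P.IsRoot (m : ℚ) := by
      intro m
      induction m with
      | zero =>
        simp only [Polynomial.IsRoot, hPeval, Nat.cast_zero]
        rw [Sab_at_zero]
        have : Bab z (0 + y) (n + 1) = Bab z y (n + 1) := by
          unfold Bab; exact gchoose_congr _ (by ring)
        rw [this, sub_self]
      | succ m ihm =>
        simp only [Polynomial.IsRoot, hPeval] at ihm ⊢
        have := hper ((m : ℚ) + 1)
        push_cast
        rw [this, show ((m : ℚ) + 1 - 1) = (m : ℚ) by ring]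
        exact ihm
    have hP0 : P = 0 := by
      refine Polynomial.eq_zero_of_infinite_isRoot P ?_
      exact Set.infinite_of_injective_forall_mem (f := fun m : ℕ => (m : ℚ))
        Nat.cast_injective (fun m => hroot m)
    have := hPeval x
    rw [hP0] at this
    simp only [Polynomial.eval_zero] at this
    linarith

/-- The convolution step: multiplying by `gOne a` shifts `y` by one. -/
lemma conv_step (a y : ℚ) :
    (PowerSeries.mk fun n => gchoose ((y + 1) - a * ((n : ℚ) - 1)) n) =
      gOne a * PowerSeries.mk (fun n => gchoose (y - a * ((n : ℚ) - 1)) n) := by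
  ext n
  rw [coeff_mk, coeff_mul, Finset.Nat.sum_antidiagonal_eq_sum_range_succ_mk]
  have hterm : ∀ k ∈ Finset.range (n + 1),
      (coeff k) (gOne a) * (coeff (n - k)) (PowerSeries.mk
        (fun m => gchoose (y - a * ((m : ℚ) - 1)) m))
      = Aab (-a) 1 k * Bab (-a) (y + a) (n - k) := by
    intro k _
    rw [coeff_mk]
    unfold gOne
    rw [coeff_mk]
    congr 1
    · unfold Aab
      rcases eq_or_ne k 0 with hk | hk
      · simp [hk]
      · simp only [hk, if_false]
        rw [gchoose_congr (k - 1) (show -a * (k : ℚ) = 1 + (k : ℚ) * (-a) - 1 by ring)]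
        ring
    · unfold Bab
      exact gchoose_congr _ (by push_cast; ring)
  rw [Finset.sum_congr rfl hterm]
  have := rothe n (-a) 1 (y + a)
  unfold Sab at this
  rw [this]
  unfold Bab
  exact gchoose_congr _ (by ring)

/-- For integers `χ ≥ 0` and `r`, with `a = r² - 1`:
`∑_{n≥0} C(χ - (r²-1)(n-1), n) z^n = g_{1,r²-1}(z)^χ · f_{0,r²-1}(z)`. -/
theorem stmt17 (r : ℤ) (χ : ℕ) :
    (PowerSeries.mk fun n =>
        gchoose ((χ : ℚ) - ((r : ℚ) ^ 2 - 1) * ((n : ℚ) - 1)) n) =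
      gOne ((r : ℚ) ^ 2 - 1) ^ χ * fZero ((r : ℚ) ^ 2 - 1) := by
  set a : ℚ := (r : ℚ) ^ 2 - 1 with ha
  induction χ with
  | zero =>
    rw [pow_zero, one_mul]
    unfold fZero
    ext n
    rw [coeff_mk, coeff_mk]
    exact gchoose_congr _ (by push_cast; ring)
  | succ χ ih =>
    have h1 : (PowerSeries.mk fun n =>
        gchoose (((χ + 1 : ℕ) : ℚ) - a * ((n : ℚ) - 1)) n)
        = (PowerSeries.mk fun n =>
        gchoose (((χ : ℚ) + 1) - a * ((n : ℚ) - 1)) n) := by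
      ext n
      rw [coeff_mk, coeff_mk]
      exact gchoose_congr _ (by push_cast; ring)
    rw [h1, conv_step a (χ : ℚ), ih, pow_succ]
    ring
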